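/- If μ is a probability measure on the space X (where X is c or c_a) with the i.d.f. property, then for the product measure μ^ℕ on X^ℕ, almost every sequence (x^(1), x^(2), ...) of points of X forms a set with the i.d.f. property. -/

import Mathlib

open Filter Topology Set MeasureTheory ProbabilityTheory

/-- The set `c` of convergent real sequences. -/
def cSet : Set (ℕ → ℝ) := {x | ∃ l : ℝ, Tendsto x atTop (nhds l)}

/-- The set `c_a` of real sequences converging to `a`. -/
def cASet (a : ℝ) : Set (ℕ → ℝ) := {x | Tendsto x atTop (nhds a)}

/-- The family of points `x 0, x 1, …` forms an i.d.f. set in the finite coordinates. -/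
def IDFFamilyCoord (x : ℕ → ℕ → ℝ) : Prop :=
  (∀ i, ∀ n, ∀ k : ℤ, x i n ≠ (k : ℝ)) ∧
  (∀ i j, x i ≠ x j → ∀ n, ∀ k : ℤ, x i n - x j n ≠ (k : ℝ))

/-- The family of points `x 0, x 1, …` forms an i.d.f. set in the limit coordinate. -/
def IDFFamilyLim (x : ℕ → ℕ → ℝ) : Prop :=
  (∀ i, ∀ l : ℝ, Tendsto (x i) atTop (nhds l) → ∀ k : ℤ, l ≠ (k : ℝ)) ∧
  (∀ i j, x i ≠ x j → ∀ li lj : ℝ, Tendsto (x i) atTop (nhds li) →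
    Tendsto (x j) atTop (nhds lj) → ∀ k : ℤ, li - lj ≠ (k : ℝ))

/-- if `μ` is a probability measure on `X` (one of `c` or `c_a`) with the
i.d.f. property, then almost every i.i.d. sequence of points with law `μ` forms an i.d.f.
set (the limit-coordinate conditions being relevant in the case `X = c`). -/
theorem ae_idf_of_idf_measure
    (X : Set (ℕ → ℝ)) (hX : X = cSet ∨ ∃ a : ℝ, X = cASet a)
    (μ : Measure (ℕ → ℝ)) [IsProbabilityMeasure μ] (hμX : μ X = 1)
    (hcoord : ∀ n : ℕ, μ {x | ∃ k : ℤ, x n = (k : ℝ)} = 0 ∧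
      (μ.prod μ) {p | ∃ k : ℤ, p.1 n - p.2 n = (k : ℝ)} = 0)
    (hlim : X = cSet →
      μ {x | ∃ k : ℤ, Tendsto x atTop (nhds (k : ℝ))} = 0 ∧
      (μ.prod μ) {p | ∃ k : ℤ, Tendsto (fun n => p.1 n - p.2 n) atTop (nhds (k : ℝ))} = 0)
    {Ω : Type} [MeasurableSpace Ω] (P : Measure Ω) [IsProbabilityMeasure P]
    (Z : ℕ → Ω → (ℕ → ℝ)) (hmeas : ∀ i, Measurable (Z i))
    (hindep : iIndepFun Z P)
    (hlaw : ∀ i, Measure.map (Z i) P = μ) :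
    ∀ᵐ ω ∂P, IDFFamilyCoord (fun i => Z i ω) ∧
      (X = cSet → IDFFamilyLim (fun i => Z i ω)) := by
  -- pulling back null sets along one coordinate
  have single : ∀ (s : Set (ℕ → ℝ)), μ s = 0 → ∀ i, P (Z i ⁻¹' s) = 0 := by
    intro s hs i
    have h := Measure.le_map_apply (μ := P) (hmeas i).aemeasurable s
    rw [hlaw i, hs] at h
    exact le_antisymm h bot_le
  -- pulling back null sets along a pair of distinct coordinates
  have pair : ∀ (s : Set ((ℕ → ℝ) × (ℕ → ℝ))), (μ.prod μ) s = 0 → ∀ i j, i ≠ j →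
      P ((fun ω => (Z i ω, Z j ω)) ⁻¹' s) = 0 := by
    intro s hs i j hij
    have hind : IndepFun (Z i) (Z j) P := hindep.indepFun hij
    have hmap : Measure.map (fun ω => (Z i ω, Z j ω)) P = μ.prod μ := by
      rw [(indepFun_iff_map_prod_eq_prod_map_map (hmeas i).aemeasurable
        (hmeas j).aemeasurable).mp hind, hlaw i, hlaw j]
    have h := Measure.le_map_apply (μ := P) ((hmeas i).prodMk (hmeas j)).aemeasurable s
    rw [hmap, hs] at h
    exact le_antisymm h bot_le
  -- single coordinate events
  have h1 : ∀ᵐ ω ∂P, ∀ i n, ∀ k : ℤ, Z i ω n ≠ (k : ℝ) := by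
    refine ae_all_iff.mpr fun i => ae_all_iff.mpr fun n => ?_
    rw [ae_iff]
    refine measure_mono_null ?_ (single _ (hcoord n).1 i)
    intro ω hω
    push_neg at hω
    obtain ⟨k, hk⟩ := hω
    exact ⟨k, hk⟩
  have h2 : ∀ᵐ ω ∂P, ∀ i j, i ≠ j → ∀ n, ∀ k : ℤ, Z i ω n - Z j ω n ≠ (k : ℝ) := by
    refine ae_all_iff.mpr fun i => ae_all_iff.mpr fun j => ?_
    by_cases hij : i = j
    · exact ae_of_all _ fun ω h => absurd hij h
    · have : ∀ᵐ ω ∂P, ∀ n, ∀ k : ℤ, Z i ω n - Z j ω n ≠ (k : ℝ) := by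
        refine ae_all_iff.mpr fun n => ?_
        rw [ae_iff]
        refine measure_mono_null ?_ (pair _ (hcoord n).2 i j hij)
        intro ω hω
        push_neg at hω
        obtain ⟨k, hk⟩ := hω
        exact ⟨k, hk⟩
      filter_upwards [this] with ω hω _
      exact hω
  have h3 : ∀ᵐ ω ∂P, X = cSet → ∀ i, ∀ l : ℝ, Tendsto (Z i ω) atTop (nhds l) →
      ∀ k : ℤ, l ≠ (k : ℝ) := by
    by_cases hc : X = cSet
    · have : ∀ᵐ ω ∂P, ∀ i, ∀ l : ℝ, Tendsto (Z i ω) atTop (nhds l) →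
          ∀ k : ℤ, l ≠ (k : ℝ) := by
        refine ae_all_iff.mpr fun i => ?_
        rw [ae_iff]
        refine measure_mono_null ?_ (single _ (hlim hc).1 i)
        intro ω hω
        push_neg at hω
        obtain ⟨l, hl, k, hk⟩ := hω
        exact ⟨k, hk ▸ hl⟩
      filter_upwards [this] with ω hω _
      exact hω
    · exact ae_of_all _ fun ω h => absurd h hc
  have h4 : ∀ᵐ ω ∂P, X = cSet → ∀ i j, i ≠ j → ∀ li lj : ℝ,
      Tendsto (Z i ω) atTop (nhds li) → Tendsto (Z j ω) atTop (nhds lj) →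
      ∀ k : ℤ, li - lj ≠ (k : ℝ) := by
    by_cases hc : X = cSet
    · have : ∀ᵐ ω ∂P, ∀ i j, i ≠ j → ∀ li lj : ℝ,
          Tendsto (Z i ω) atTop (nhds li) → Tendsto (Z j ω) atTop (nhds lj) →
          ∀ k : ℤ, li - lj ≠ (k : ℝ) := by
        refine ae_all_iff.mpr fun i => ae_all_iff.mpr fun j => ?_
        by_cases hij : i = j
        · exact ae_of_all _ fun ω h => absurd hij h
        · have : ∀ᵐ ω ∂P, ∀ li lj : ℝ,
              Tendsto (Z i ω) atTop (nhds li) → Tendsto (Z j ω) atTop (nhds lj) →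
              ∀ k : ℤ, li - lj ≠ (k : ℝ) := by
            rw [ae_iff]
            refine measure_mono_null ?_ (pair _ (hlim hc).2 i j hij)
            intro ω hω
            push_neg at hω
            obtain ⟨li, lj, hi, hj, k, hk⟩ := hω
            exact ⟨k, hk ▸ (hi.sub hj)⟩
          filter_upwards [this] with ω hω _
          exact hω
      filter_upwards [this] with ω hω _
      exact hω
    · exact ae_of_all _ fun ω h => absurd h hc
  filter_upwards [h1, h2, h3, h4] with ω hω1 hω2 hω3 hω4
  refine ⟨⟨fun i n k => hω1 i n k, fun i j hne n k =>
    hω2 i j (fun h => hne (by rw [h])) n k⟩, fun hc =>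
    ⟨fun i l hl k => hω3 hc i l hl k, fun i j hne li lj hi hj k =>
    hω4 hc i j (fun h => hne (by rw [h])) li lj hi hj k⟩⟩
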